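/- Let N be an N-layer (open or closed) Π³-net with N≥3, let m0 be any marking, and let W̄ be the maximal entry of W⁻ and W⁺. Then for every m∈R(m0): m·P_{N−1}^{¬max} ≤ C_{N−2}^{m0}; consequently, if W̄≥1, then m·P_{N−1}^{¬max} ≤ |P|·W̄·‖m0‖. -/

import Mathlib

open Finset

section PetriBasics

variable {P T : Type} [Fintype P] [Fintype T]

/-- Transition `t` is enabled at marking `m`. -/
def Enabled (Wm : P → T → ℕ) (m : P → ℕ) (t : T) : Prop :=
  ∀ p, Wm p t ≤ m p

/-- The marking obtained by firing transition `t` at marking `m`. -/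
def Fire (Wm Wp : P → T → ℕ) (m : P → ℕ) (t : T) : P → ℕ :=
  fun p => m p - Wm p t + Wp p t

/-- One firing step. -/
def Step (Wm Wp : P → T → ℕ) (m m' : P → ℕ) : Prop :=
  ∃ t, Enabled Wm m t ∧ m' = Fire Wm Wp m t

/-- Reachability. -/
def Reach (Wm Wp : P → T → ℕ) : (P → ℕ) → (P → ℕ) → Prop :=
  Relation.ReflTransGen (Step Wm Wp)

/-- One firing step using a transition from the set `S`. -/
def StepIn (Wm Wp : P → T → ℕ) (S : T → Prop) (m m' : P → ℕ) : Prop :=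
  ∃ t, S t ∧ Enabled Wm m t ∧ m' = Fire Wm Wp m t

/-- Reachability using only transitions from the set `S`. -/
def ReachIn (Wm Wp : P → T → ℕ) (S : T → Prop) : (P → ℕ) → (P → ℕ) → Prop :=
  Relation.ReflTransGen (StepIn Wm Wp S)

/-- The marked net `(N, m0)` is live. -/
def LiveMarked (Wm Wp : P → T → ℕ) (m0 : P → ℕ) : Prop :=
  ∀ (t : T) (m : P → ℕ), Reach Wm Wp m0 m →
    ∃ m', Reach Wm Wp m m' ∧ Enabled Wm m' t

/-- `b` is a bag of the net. -/
def IsBag (Wm Wp : P → T → ℕ) (b : P → ℕ) : Prop :=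
  ∃ t, b = (fun p => Wm p t) ∨ b = (fun p => Wp p t)

/-- Edges of the bag graph. -/
def BagEdge (Wm Wp : P → T → ℕ) (b b' : P → ℕ) : Prop :=
  ∃ t, b = (fun p => Wm p t) ∧ b' = (fun p => Wp p t)

/-- Every connected component of the bag graph is strongly connected. -/
def WeaklyReversible (Wm Wp : P → T → ℕ) : Prop :=
  ∀ b b' : P → ℕ,
    Relation.ReflTransGen (fun x y => BagEdge Wm Wp x y ∨ BagEdge Wm Wp y x) b b' →
    Relation.ReflTransGen (BagEdge Wm Wp) b b'

/-- `w · W(t)`, where `W = W⁺ − W⁻` is the incidence matrix. -/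
def IncDot (Wm Wp : P → T → ℕ) (w : P → ℚ) (t : T) : ℚ :=
  ∑ p, w p * ((Wp p t : ℚ) - (Wm p t : ℚ))

/-- `w` is a witness of the bag `b`. -/
def IsWitness (Wm Wp : P → T → ℕ) (b : P → ℕ) (w : P → ℚ) : Prop :=
  ∀ t, (b = (fun p => Wm p t) → IncDot Wm Wp w t = -1) ∧
       (b = (fun p => Wp p t) → IncDot Wm Wp w t = 1) ∧
       (b ≠ (fun p => Wm p t) → b ≠ (fun p => Wp p t) → IncDot Wm Wp w t = 0)

/-- `N` is a Π²-net. -/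
def IsPi2 (Wm Wp : P → T → ℕ) : Prop :=
  WeaklyReversible Wm Wp ∧ ∀ b, IsBag Wm Wp b → ∃ w, IsWitness Wm Wp b w

/-- The potential of a place: `‖b_p‖ − 1`. -/
def potOf (bag : P → P → ℕ) (p : P) : ℕ := (∑ q, bag p q) - 1

/-- Minimum of `f` over `S`, with default value `d` when `S` is empty. -/
def minPotD {α : Type} (S : Finset α) (f : α → ℕ) (d : ℕ) : ℕ :=
  if h : S.Nonempty then S.inf' h f else d

end PetriBasics

/-- An `Nn`-layer closed Π³-net. -/
structure ClosedPi3 (P T : Type) [Fintype P] [Fintype T] (Nn : ℕ) where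
  Wm : P → T → ℕ
  Wp : P → T → ℕ
  no_useless : ∀ t, (fun p => Wm p t) ≠ (fun p => Wp p t)
  no_dup : ∀ t t' : T, (fun p => Wm p t) = (fun p => Wm p t') →
      (fun p => Wp p t) = (fun p => Wp p t') → t = t'
  /-- the bag associated with each place -/
  bag : P → P → ℕ
  /-- the layer of each place -/
  layer : P → ℕ
  bag_isBag : ∀ p, IsBag Wm Wp (bag p)
  bag_surj : ∀ b, IsBag Wm Wp b → ∃ p, bag p = b
  bag_inj : Function.Injective bag
  bag_self : ∀ p, bag p p = 1
  layer_pos : ∀ p, 1 ≤ layer p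
  layer_le : ∀ p, layer p ≤ Nn
  layer_surj : ∀ i, 1 ≤ i → i ≤ Nn → ∃ p, layer p = i
  edge_layer : ∀ p q : P, BagEdge Wm Wp (bag p) (bag q) → layer p = layer q
  layer_conn : ∀ p q : P, layer p = layer q →
      Relation.ReflTransGen (BagEdge Wm Wp) (bag p) (bag q)
  resource : ∀ p q : P, q ≠ p → 0 < bag p q →
      layer q + 1 = layer p ∧ ∀ r, layer r = layer q → potOf bag r ≤ potOf bag q

namespace ClosedPi3

variable {P T : Type} [Fintype P] [Fintype T] {Nn : ℕ} (C : ClosedPi3 P T Nn)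

def pot (p : P) : ℕ := potOf C.bag p

/-- `P_i`: the places of layer `i`. -/
def places (i : ℕ) : Finset P := Finset.univ.filter (fun p => C.layer p = i)

/-- `POT_i`: the maximal potential in layer `i`. -/
def POT (i : ℕ) : ℕ := (C.places i).sup C.pot

/-- `P_i^max`: the places of maximal potential in layer `i`. -/
def placesMax (i : ℕ) : Finset P := (C.places i).filter (fun p => C.pot p = C.POT i)

/-- `cin(p) = POT_i − pot(p)` for `p ∈ P_i`. -/
def cin (p : P) : ℤ := (C.POT (C.layer p) : ℤ) - (C.pot p : ℤ)

/-- The invariant vector `v^(i)` (for `i = Nn` this is `v^(N)`). -/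
def vvec (i : ℕ) : P → ℤ :=
  if i = Nn then (fun p => if C.layer p = Nn then 1 else 0)
  else fun p => (if C.layer p = i then 1 else 0) + (if C.layer p = i + 1 then C.cin p else 0)

/-- `m · v^(i)`. -/
def vdot (i : ℕ) (m : P → ℕ) : ℤ := ∑ p, C.vvec i p * (m p : ℤ)

/-- `m ∈ Inv_i(m0)`. -/
def InvSet (m0 : P → ℕ) (i : ℕ) (m : P → ℕ) : Prop := C.vdot i m = C.vdot i m0

/-- `m ∈ Live_i`. -/
def LiveSet (i : ℕ) (m : P → ℕ) : Prop :=
  if i = Nn then 0 < ∑ p ∈ C.places Nn, m p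
  else minPotD ((C.places (i + 1)).filter (fun p => 0 < m p)) C.pot (C.POT (i + 1))
        ≤ ∑ p ∈ C.places i, m p

/-- `t` belongs to `⋃ {T_i | S i}`: the input bag of `t` lies in a layer satisfying `S`. -/
def transIn (S : ℕ → Prop) (t : T) : Prop :=
  ∃ p, S (C.layer p) ∧ C.bag p = (fun q => C.Wm q t)

/-- The marking `m` is `i`-live. -/
def iLive (i : ℕ) (m : P → ℕ) : Prop :=
  ∀ t, C.transIn (· ≤ i) t →
    ∃ m', ReachIn C.Wm C.Wp (C.transIn (· ≤ i)) m m' ∧ Enabled C.Wm m' t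

end ClosedPi3

/-- An `Nn`-layer open Π³-net over places `P`: it is obtained from an `Nn`-layer
closed Π³-net over `Option P` by deleting the place `none` (a.k.a. `p_ext`),
which lies in layer `Nn`. -/
structure OpenPi3 (P T : Type) [Fintype P] [Fintype T] (Nn : ℕ) where
  closed : ClosedPi3 (Option P) T Nn
  pext_layer : closed.layer none = Nn

namespace OpenPi3

variable {P T : Type} [Fintype P] [Fintype T] {Nn : ℕ} (O : OpenPi3 P T Nn)

/-- Backward incidence matrix of the open net. -/
def Wm : P → T → ℕ := fun p t => O.closed.Wm (some p) t

/-- Forward incidence matrix of the open net. -/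
def Wp : P → T → ℕ := fun p t => O.closed.Wp (some p) t

def layer (p : P) : ℕ := O.closed.layer (some p)

def pot (p : P) : ℕ := O.closed.pot (some p)

/-- `pot(p_ext)`. -/
def potExt : ℕ := O.closed.pot none

/-- `P_i`: the (remaining) places of layer `i`. -/
def places (i : ℕ) : Finset P := Finset.univ.filter (fun p => O.layer p = i)

/-- `POT_i`, with `POT_N = pot(p_ext)` for open nets. -/
def POT (i : ℕ) : ℕ := if i = Nn then O.potExt else (O.places i).sup O.pot

def placesMax (i : ℕ) : Finset P := (O.places i).filter (fun p => O.pot p = O.POT i)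

def cin (p : P) : ℤ := (O.POT (O.layer p) : ℤ) - (O.pot p : ℤ)

/-- The invariant vector `v^(i)` (used for `1 ≤ i ≤ Nn − 1`). -/
def vvec (i : ℕ) : P → ℤ :=
  fun p => (if O.layer p = i then 1 else 0) + (if O.layer p = i + 1 then O.cin p else 0)

def vdot (i : ℕ) (m : P → ℕ) : ℤ := ∑ p, O.vvec i p * (m p : ℤ)

def InvSet (m0 : P → ℕ) (i : ℕ) (m : P → ℕ) : Prop :=
  if i = Nn then True else O.vdot i m = O.vdot i m0

/-- `m ∈ Live_i` for the open net: for `i = N − 1` the virtual place `p_ext`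
always counts as marked. -/
def LiveSet (i : ℕ) (m : P → ℕ) : Prop :=
  if i = Nn then True
  else if i + 1 = Nn then
    min O.potExt
        (minPotD ((O.places Nn).filter (fun p => 0 < m p)) O.pot O.potExt)
      ≤ ∑ p ∈ O.places i, m p
  else
    minPotD ((O.places (i + 1)).filter (fun p => 0 < m p)) O.pot (O.POT (i + 1))
      ≤ ∑ p ∈ O.places i, m p

def transIn (S : ℕ → Prop) (t : T) : Prop := O.closed.transIn S t

def iLive (i : ℕ) (m : P → ℕ) : Prop :=
  ∀ t, O.transIn (· ≤ i) t →
    ∃ m', ReachIn O.Wm O.Wp (O.transIn (· ≤ i)) m m' ∧ Enabled O.Wm m' t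

end OpenPi3

section Aux

variable {Q T : Type} [Fintype Q] [Fintype T] {Nn : ℕ}

/-- If `w · W(t) = 0` for all `t`, then `w · m` is invariant along reachability. -/
lemma sumInv {Wm Wp : Q → T → ℕ} {w : Q → ℤ}
    (hflow : ∀ t, ∑ q, w q * (Wm q t : ℤ) = ∑ q, w q * (Wp q t : ℤ))
    {m m' : Q → ℕ} (h : Reach Wm Wp m m') :
    ∑ q, w q * (m' q : ℤ) = ∑ q, w q * (m q : ℤ) := by
  induction h with
  | refl => rfl
  | tail _ hstep ih =>
    rename_i b c _
    obtain ⟨t, hen, rfl⟩ := hstep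
    rw [← ih]
    have key : ∀ q, w q * ((Fire Wm Wp b t q : ℕ) : ℤ) =
        w q * (b q : ℤ) - w q * (Wm q t : ℤ) + w q * (Wp q t : ℤ) := by
      intro q
      have h1 := hen q
      have h2 : ((Fire Wm Wp b t q : ℕ) : ℤ) = (b q : ℤ) - Wm q t + Wp q t := by
        simp only [Fire]; omega
      rw [h2]; ring
    calc ∑ q, w q * ((Fire Wm Wp b t q : ℕ) : ℤ)
        = ∑ q, (w q * (b q : ℤ) - w q * (Wm q t : ℤ) + w q * (Wp q t : ℤ)) := by
          exact Finset.sum_congr rfl (fun q _ => key q)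
      _ = (∑ q, w q * (b q : ℤ)) - (∑ q, w q * (Wm q t : ℤ))
            + (∑ q, w q * (Wp q t : ℤ)) := by
          rw [Finset.sum_add_distrib, Finset.sum_sub_distrib]
      _ = ∑ q, w q * (b q : ℤ) := by rw [hflow t]; ring

lemma potCast (C : ClosedPi3 Q T Nn) (q : Q) :
    (C.pot q : ℤ) = (∑ r, (C.bag q r : ℤ)) - 1 := by
  have h1 : 1 ≤ ∑ r, C.bag q r := by
    calc 1 = C.bag q q := (C.bag_self q).symm
      _ ≤ ∑ r, C.bag q r :=
        Finset.single_le_sum (fun r _ => Nat.zero_le _) (Finset.mem_univ q)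
  unfold ClosedPi3.pot potOf
  rw [Nat.cast_sub h1]
  push_cast
  ring

lemma bagSum (C : ClosedPi3 Q T Nn) (hN : 3 ≤ Nn)
    (w : Q → ℤ) (K : ℤ)
    (Hw2 : ∀ q, C.layer q = Nn - 2 → w q = 1)
    (Hw1 : ∀ q, C.layer q = Nn - 1 → w q = K - C.pot q)
    (Hw0 : ∀ q, C.layer q ≠ Nn - 2 → C.layer q ≠ Nn - 1 → w q = 0)
    (HK : ∀ p, C.layer p = Nn - 1 →
      (∀ r, C.layer r = Nn - 1 → C.pot r ≤ C.pot p) → K = (C.pot p : ℤ))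
    (q : Q) :
    ∑ r, w r * (C.bag q r : ℤ) =
      if C.layer q = Nn - 2 then 1 else if C.layer q = Nn - 1 then K else 0 := by
  classical
  have hsplit : ∑ r, w r * (C.bag q r : ℤ)
      = w q * (C.bag q q : ℤ) + ∑ r ∈ Finset.univ.erase q, w r * (C.bag q r : ℤ) :=
    (Finset.add_sum_erase _ _ (Finset.mem_univ q)).symm
  have hres : ∀ r ∈ Finset.univ.erase q, C.bag q r ≠ 0 →
      C.layer r + 1 = C.layer q ∧ ∀ s, C.layer s = C.layer r → C.pot s ≤ C.pot r := by
    intro r hr hne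
    exact C.resource q r (Finset.ne_of_mem_erase hr) (Nat.pos_of_ne_zero hne)
  by_cases hq2 : C.layer q = Nn - 2
  · rw [if_pos hq2, hsplit, C.bag_self q, Hw2 q hq2]
    have hz : ∑ r ∈ Finset.univ.erase q, w r * (C.bag q r : ℤ) = 0 := by
      apply Finset.sum_eq_zero
      intro r hr
      by_cases hb : C.bag q r = 0
      · simp [hb]
      · obtain ⟨hl, _⟩ := hres r hr hb
        rw [Hw0 r (by omega) (by omega)]
        ring
    rw [hz]; ring
  · by_cases hq1 : C.layer q = Nn - 1
    · rw [if_neg hq2, if_pos hq1, hsplit, C.bag_self q, Hw1 q hq1]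
      have herase : ∑ r ∈ Finset.univ.erase q, w r * (C.bag q r : ℤ)
          = ∑ r ∈ Finset.univ.erase q, (C.bag q r : ℤ) := by
        apply Finset.sum_congr rfl
        intro r hr
        by_cases hb : C.bag q r = 0
        · simp [hb]
        · obtain ⟨hl, _⟩ := hres r hr hb
          rw [Hw2 r (by omega), one_mul]
      have hpot : ∑ r ∈ Finset.univ.erase q, (C.bag q r : ℤ) = (C.pot q : ℤ) := by
        have hpc := potCast C q
        have hsum : (∑ r, (C.bag q r : ℤ))
            = (C.bag q q : ℤ) + ∑ r ∈ Finset.univ.erase q, (C.bag q r : ℤ) :=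
          (Finset.add_sum_erase _ _ (Finset.mem_univ q)).symm
        rw [C.bag_self q] at hsum
        rw [hpc, hsum]
        push_cast
        ring
      rw [herase, hpot]; ring
    · rw [if_neg hq2, if_neg hq1, hsplit, C.bag_self q, Hw0 q hq2 hq1]
      have hz : ∑ r ∈ Finset.univ.erase q, w r * (C.bag q r : ℤ) = 0 := by
        apply Finset.sum_eq_zero
        intro r hr
        by_cases hb : C.bag q r = 0
        · simp [hb]
        · obtain ⟨hl, hmax⟩ := hres r hr hb
          by_cases hr2 : C.layer r = Nn - 2
          · exfalso; omega
          · by_cases hr1 : C.layer r = Nn - 1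
            · have hKr : K = (C.pot r : ℤ) :=
                HK r hr1 (fun s hs => hmax s (hs.trans hr1.symm))
              rw [Hw1 r hr1, hKr]
              ring
            · rw [Hw0 r hr2 hr1]; ring
      rw [hz]; ring

lemma flowZero (C : ClosedPi3 Q T Nn) (hN : 3 ≤ Nn)
    (w : Q → ℤ) (K : ℤ)
    (Hw2 : ∀ q, C.layer q = Nn - 2 → w q = 1)
    (Hw1 : ∀ q, C.layer q = Nn - 1 → w q = K - C.pot q)
    (Hw0 : ∀ q, C.layer q ≠ Nn - 2 → C.layer q ≠ Nn - 1 → w q = 0)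
    (HK : ∀ p, C.layer p = Nn - 1 →
      (∀ r, C.layer r = Nn - 1 → C.pot r ≤ C.pot p) → K = (C.pot p : ℤ))
    (t : T) :
    ∑ q, w q * (C.Wm q t : ℤ) = ∑ q, w q * (C.Wp q t : ℤ) := by
  obtain ⟨pm, hpm⟩ := C.bag_surj (fun q => C.Wm q t) ⟨t, Or.inl rfl⟩
  obtain ⟨pp, hpp⟩ := C.bag_surj (fun q => C.Wp q t) ⟨t, Or.inr rfl⟩
  have hlay : C.layer pm = C.layer pp := C.edge_layer pm pp ⟨t, hpm, hpp⟩
  have h1 := bagSum C hN w K Hw2 Hw1 Hw0 HK pm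
  have h2 := bagSum C hN w K Hw2 Hw1 Hw0 HK pp
  have e1 : ∑ q, w q * (C.Wm q t : ℤ) = ∑ r, w r * (C.bag pm r : ℤ) := by
    simp only [hpm]
  have e2 : ∑ q, w q * (C.Wp q t : ℤ) = ∑ r, w r * (C.bag pp r : ℤ) := by
    simp only [hpp]
  rw [e1, e2, h1, h2, hlay]

end Aux
/-- for every reachable marking `m` of an N-layer (open or
closed) Π³-net with `N ≥ 3`, `m · P_{N−1}^{¬max} ≤ C_{N−2}^{m0}`, and if the
maximal edge weight `W̄ ≥ 1` then `m · P_{N−1}^{¬max} ≤ |P| · W̄ · ‖m0‖`. -/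
theorem stmt_16 :
    (∀ (P T : Type) [Fintype P] [Fintype T] [DecidableEq P] (Nn : ℕ),
      3 ≤ Nn → ∀ (C : ClosedPi3 P T Nn) (m0 m : P → ℕ),
        Reach C.Wm C.Wp m0 m →
          (∑ p ∈ C.places (Nn - 1) \ C.placesMax (Nn - 1), (m p : ℤ))
              ≤ C.vdot (Nn - 2) m0 ∧
          (1 ≤ (Finset.univ.sup fun pt : P × T =>
                  max (C.Wm pt.1 pt.2) (C.Wp pt.1 pt.2)) →
            (∑ p ∈ C.places (Nn - 1) \ C.placesMax (Nn - 1), m p) ≤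
              Fintype.card P *
                (Finset.univ.sup fun pt : P × T =>
                  max (C.Wm pt.1 pt.2) (C.Wp pt.1 pt.2)) * (∑ p, m0 p))) ∧
    (∀ (P T : Type) [Fintype P] [Fintype T] [DecidableEq P] (Nn : ℕ),
      3 ≤ Nn → ∀ (O : OpenPi3 P T Nn) (m0 m : P → ℕ),
        Reach O.Wm O.Wp m0 m →
          (∑ p ∈ O.places (Nn - 1) \ O.placesMax (Nn - 1), (m p : ℤ))
              ≤ O.vdot (Nn - 2) m0 ∧
          (1 ≤ (Finset.univ.sup fun pt : P × T =>
                  max (O.Wm pt.1 pt.2) (O.Wp pt.1 pt.2)) →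
            (∑ p ∈ O.places (Nn - 1) \ O.placesMax (Nn - 1), m p) ≤
              Fintype.card P *
                (Finset.univ.sup fun pt : P × T =>
                  max (O.Wm pt.1 pt.2) (O.Wp pt.1 pt.2)) * (∑ p, m0 p))) := by
  constructor
  · -- Closed case
    intro P T _ _ _ Nn hN C m0 m hreach
    classical
    set V := Finset.univ.sup (fun pt : P × T => max (C.Wm pt.1 pt.2) (C.Wp pt.1 pt.2))
      with hV
    set w : P → ℤ := C.vvec (Nn - 2) with hw
    have hNn : Nn - 2 ≠ Nn := by omega
    have hplus : Nn - 2 + 1 = Nn - 1 := by omega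
    have h21 : Nn - 2 ≠ Nn - 1 := by omega
    have hwval : ∀ q, w q = (if C.layer q = Nn - 2 then 1 else 0)
        + (if C.layer q = Nn - 1 then (C.POT (Nn - 1) : ℤ) - C.pot q else 0) := by
      intro q
      simp only [hw, ClosedPi3.vvec, if_neg hNn, hplus, ClosedPi3.cin]
      by_cases h : C.layer q = Nn - 1 <;> simp [h]
    have Hw2 : ∀ q, C.layer q = Nn - 2 → w q = 1 := by
      intro q h
      rw [hwval q, if_pos h, if_neg (by omega)]
      ring
    have Hw1 : ∀ q, C.layer q = Nn - 1 →
        w q = (C.POT (Nn - 1) : ℤ) - C.pot q := by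
      intro q h
      rw [hwval q, if_neg (by omega), if_pos h]
      ring
    have Hw0 : ∀ q, C.layer q ≠ Nn - 2 → C.layer q ≠ Nn - 1 → w q = 0 := by
      intro q h1 h2
      rw [hwval q, if_neg h1, if_neg h2]
      ring
    have hmemPl : ∀ q, C.layer q = Nn - 1 → q ∈ C.places (Nn - 1) := by
      intro q h
      simp [ClosedPi3.places, h]
    have hpotle : ∀ q, C.layer q = Nn - 1 → C.pot q ≤ C.POT (Nn - 1) := by
      intro q h
      exact Finset.le_sup (hmemPl q h)
    have HK : ∀ p, C.layer p = Nn - 1 →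
        (∀ r, C.layer r = Nn - 1 → C.pot r ≤ C.pot p) →
        (C.POT (Nn - 1) : ℤ) = (C.pot p : ℤ) := by
      intro p hp hmax
      have : C.POT (Nn - 1) = C.pot p := by
        apply le_antisymm
        · apply Finset.sup_le
          intro r hr
          exact hmax r (by simpa [ClosedPi3.places] using hr)
        · exact hpotle p hp
      exact_mod_cast this
    have hflow := flowZero C hN w _ Hw2 Hw1 Hw0 HK
    have hinv : ∑ q, w q * (m q : ℤ) = ∑ q, w q * (m0 q : ℤ) := sumInv hflow hreach
    have hvdot : C.vdot (Nn - 2) m0 = ∑ q, w q * (m0 q : ℤ) := rfl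
    have hw_nonneg : ∀ q, 0 ≤ w q := by
      intro q
      rw [hwval q]
      by_cases h1 : C.layer q = Nn - 2
      · rw [if_pos h1, if_neg (by omega)]; norm_num
      · by_cases h2 : C.layer q = Nn - 1
        · rw [if_neg h1, if_pos h2]
          have := hpotle q h2
          omega
        · rw [if_neg h1, if_neg h2]; norm_num
    have hw_ge1 : ∀ q ∈ C.places (Nn - 1) \ C.placesMax (Nn - 1), 1 ≤ w q := by
      intro q hq
      rw [Finset.mem_sdiff] at hq
      obtain ⟨hq1, hq2⟩ := hq
      have hlay : C.layer q = Nn - 1 := by simpa [ClosedPi3.places] using hq1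
      have hne : C.pot q ≠ C.POT (Nn - 1) := by
        intro h
        exact hq2 (by simp [ClosedPi3.placesMax, hq1, h])
      have hlt : C.pot q < C.POT (Nn - 1) := lt_of_le_of_ne (hpotle q hlay) hne
      rw [Hw1 q hlay]
      omega
    have part1 : (∑ p ∈ C.places (Nn - 1) \ C.placesMax (Nn - 1), (m p : ℤ))
        ≤ C.vdot (Nn - 2) m0 := by
      calc ∑ p ∈ C.places (Nn - 1) \ C.placesMax (Nn - 1), (m p : ℤ)
          ≤ ∑ p ∈ C.places (Nn - 1) \ C.placesMax (Nn - 1), w p * (m p : ℤ) :=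
            Finset.sum_le_sum (fun p hp =>
              le_mul_of_one_le_left (Nat.cast_nonneg _) (hw_ge1 p hp))
        _ ≤ ∑ p, w p * (m p : ℤ) :=
            Finset.sum_le_sum_of_subset_of_nonneg (Finset.subset_univ _)
              (fun p _ _ => mul_nonneg (hw_nonneg p) (Nat.cast_nonneg _))
        _ = ∑ q, w q * (m0 q : ℤ) := hinv
        _ = C.vdot (Nn - 2) m0 := hvdot.symm
    refine ⟨part1, fun hV1 => ?_⟩
    have hentry : ∀ q r, C.bag q r ≤ V := by
      intro q r
      obtain ⟨t, ht | ht⟩ := C.bag_isBag q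
      · calc C.bag q r = C.Wm r t := by rw [ht]
          _ ≤ max (C.Wm r t) (C.Wp r t) := le_max_left _ _
          _ ≤ V := by
              rw [hV]
              exact Finset.le_sup
                (f := fun pt : P × T => max (C.Wm pt.1 pt.2) (C.Wp pt.1 pt.2))
                (Finset.mem_univ (r, t))
      · calc C.bag q r = C.Wp r t := by rw [ht]
          _ ≤ max (C.Wm r t) (C.Wp r t) := le_max_right _ _
          _ ≤ V := by
              rw [hV]
              exact Finset.le_sup
                (f := fun pt : P × T => max (C.Wm pt.1 pt.2) (C.Wp pt.1 pt.2))
                (Finset.mem_univ (r, t))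
    have hpotV : ∀ q : P, C.pot q ≤ Fintype.card P * V := by
      intro q
      calc C.pot q ≤ ∑ r, C.bag q r := Nat.sub_le _ _
        _ ≤ ∑ _r : P, V := Finset.sum_le_sum (fun r _ => hentry q r)
        _ = Fintype.card P * V := by
            rw [Finset.sum_const, smul_eq_mul, Finset.card_univ]
    have hPOTV : C.POT (Nn - 1) ≤ Fintype.card P * V :=
      Finset.sup_le (fun q _ => hpotV q)
    have hwle : ∀ q : P, w q ≤ ((Fintype.card P * V : ℕ) : ℤ) := by
      intro q
      have hc : 1 ≤ Fintype.card P := Fintype.card_pos_iff.mpr ⟨q⟩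
      have h1 : 1 ≤ Fintype.card P * V := Nat.one_le_iff_ne_zero.mpr (by positivity)
      rw [hwval q]
      by_cases h1' : C.layer q = Nn - 2
      · rw [if_pos h1', if_neg (by omega)]; omega
      · by_cases h2' : C.layer q = Nn - 1
        · rw [if_neg h1', if_pos h2']
          have h3 := hPOTV
          omega
        · rw [if_neg h1', if_neg h2']; omega
    have part2 : C.vdot (Nn - 2) m0
        ≤ ((Fintype.card P * V : ℕ) : ℤ) * ∑ p, (m0 p : ℤ) := by
      rw [hvdot]
      calc ∑ q, w q * (m0 q : ℤ)
          ≤ ∑ q, ((Fintype.card P * V : ℕ) : ℤ) * (m0 q : ℤ) :=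
            Finset.sum_le_sum (fun q _ =>
              mul_le_mul_of_nonneg_right (hwle q) (Nat.cast_nonneg _))
        _ = ((Fintype.card P * V : ℕ) : ℤ) * ∑ p, (m0 p : ℤ) := by
            rw [Finset.mul_sum]
    have final := part1.trans part2
    have : (↑(∑ p ∈ C.places (Nn - 1) \ C.placesMax (Nn - 1), m p) : ℤ)
        ≤ ((Fintype.card P * V * ∑ p, m0 p : ℕ) : ℤ) := by
      push_cast
      push_cast at final
      linarith
    exact_mod_cast this
  · -- Open case
    intro P T _ _ _ Nn hN O m0 m hreach
    classical
    set V := Finset.univ.sup (fun pt : P × T => max (O.Wm pt.1 pt.2) (O.Wp pt.1 pt.2))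
      with hV
    set w : P → ℤ := O.vvec (Nn - 2) with hw
    set C := O.closed with hC
    have hext : C.layer none = Nn := O.pext_layer
    have hplus : Nn - 2 + 1 = Nn - 1 := by omega
    have h21 : Nn - 2 ≠ Nn - 1 := by omega
    have hN1N : Nn - 1 ≠ Nn := by omega
    have hPOTdef : O.POT (Nn - 1) = (O.places (Nn - 1)).sup O.pot := by
      unfold OpenPi3.POT
      rw [if_neg hN1N]
    have hwval : ∀ p, w p = (if O.layer p = Nn - 2 then 1 else 0)
        + (if O.layer p = Nn - 1 then (O.POT (Nn - 1) : ℤ) - O.pot p else 0) := by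
      intro p
      simp only [hw, OpenPi3.vvec, hplus, OpenPi3.cin]
      by_cases h : O.layer p = Nn - 1 <;> simp [h]
    set w' : Option P → ℤ := fun o => Option.elim o 0 w with hw'
    have Hw2 : ∀ q : Option P, C.layer q = Nn - 2 → w' q = 1 := by
      rintro (_ | p) h
      · exfalso; rw [hext] at h; omega
      · show w p = 1
        have h' : O.layer p = Nn - 2 := h
        rw [hwval p, if_pos h', if_neg (by omega)]
        ring
    have Hw1 : ∀ q : Option P, C.layer q = Nn - 1 →
        w' q = (O.POT (Nn - 1) : ℤ) - C.pot q := by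
      rintro (_ | p) h
      · exfalso; rw [hext] at h; omega
      · show w p = (O.POT (Nn - 1) : ℤ) - O.pot p
        have h' : O.layer p = Nn - 1 := h
        rw [hwval p, if_neg (by omega), if_pos h']
        ring
    have Hw0 : ∀ q : Option P, C.layer q ≠ Nn - 2 → C.layer q ≠ Nn - 1 → w' q = 0 := by
      rintro (_ | p) h1 h2
      · rfl
      · show w p = 0
        have h1' : O.layer p ≠ Nn - 2 := h1
        have h2' : O.layer p ≠ Nn - 1 := h2
        rw [hwval p, if_neg h1', if_neg h2']
        ring
    have hmemPl : ∀ q : P, O.layer q = Nn - 1 → q ∈ O.places (Nn - 1) := by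
      intro q h
      simp [OpenPi3.places, h]
    have hpotle : ∀ q : P, O.layer q = Nn - 1 → O.pot q ≤ O.POT (Nn - 1) := by
      intro q h
      rw [hPOTdef]
      exact Finset.le_sup (hmemPl q h)
    have HK : ∀ p : Option P, C.layer p = Nn - 1 →
        (∀ r, C.layer r = Nn - 1 → C.pot r ≤ C.pot p) →
        (O.POT (Nn - 1) : ℤ) = (C.pot p : ℤ) := by
      rintro (_ | p) hp hmax
      · exfalso; rw [hext] at hp; omega
      · have : O.POT (Nn - 1) = O.pot p := by
          apply le_antisymm
          · rw [hPOTdef]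
            apply Finset.sup_le
            intro r hr
            exact hmax (some r) (Finset.mem_filter.mp hr).2
          · exact hpotle p hp
        exact_mod_cast this
    have hflowC := flowZero C hN w' _ Hw2 Hw1 Hw0 HK
    have hflow : ∀ t, ∑ p, w p * (O.Wm p t : ℤ) = ∑ p, w p * (O.Wp p t : ℤ) := by
      intro t
      have := hflowC t
      rw [Fintype.sum_option, Fintype.sum_option] at this
      simp only [hw', Option.elim_none, Option.elim_some, zero_mul, zero_add] at this
      exact this
    have hinv : ∑ q, w q * (m q : ℤ) = ∑ q, w q * (m0 q : ℤ) := sumInv hflow hreach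
    have hvdot : O.vdot (Nn - 2) m0 = ∑ q, w q * (m0 q : ℤ) := rfl
    have hw_nonneg : ∀ q, 0 ≤ w q := by
      intro q
      rw [hwval q]
      by_cases h1 : O.layer q = Nn - 2
      · rw [if_pos h1, if_neg (by omega)]; norm_num
      · by_cases h2 : O.layer q = Nn - 1
        · rw [if_neg h1, if_pos h2]
          have := hpotle q h2
          omega
        · rw [if_neg h1, if_neg h2]; norm_num
    have hw_ge1 : ∀ q ∈ O.places (Nn - 1) \ O.placesMax (Nn - 1), 1 ≤ w q := by
      intro q hq
      rw [Finset.mem_sdiff] at hq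
      obtain ⟨hq1, hq2⟩ := hq
      have hlay : O.layer q = Nn - 1 := by simpa [OpenPi3.places] using hq1
      have hne : O.pot q ≠ O.POT (Nn - 1) := by
        intro h
        exact hq2 (by simp [OpenPi3.placesMax, hq1, h])
      have hlt : O.pot q < O.POT (Nn - 1) := lt_of_le_of_ne (hpotle q hlay) hne
      have := Hw1 (some q) hlay
      rw [hwval q, if_neg (by omega), if_pos hlay]
      omega
    have part1 : (∑ p ∈ O.places (Nn - 1) \ O.placesMax (Nn - 1), (m p : ℤ))
        ≤ O.vdot (Nn - 2) m0 := by
      calc ∑ p ∈ O.places (Nn - 1) \ O.placesMax (Nn - 1), (m p : ℤ)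
          ≤ ∑ p ∈ O.places (Nn - 1) \ O.placesMax (Nn - 1), w p * (m p : ℤ) :=
            Finset.sum_le_sum (fun p hp =>
              le_mul_of_one_le_left (Nat.cast_nonneg _) (hw_ge1 p hp))
        _ ≤ ∑ p, w p * (m p : ℤ) :=
            Finset.sum_le_sum_of_subset_of_nonneg (Finset.subset_univ _)
              (fun p _ _ => mul_nonneg (hw_nonneg p) (Nat.cast_nonneg _))
        _ = ∑ q, w q * (m0 q : ℤ) := hinv
        _ = O.vdot (Nn - 2) m0 := hvdot.symm
    refine ⟨part1, fun hV1 => ?_⟩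
    have hentry : ∀ (q : Option P) (r : P), C.bag q (some r) ≤ V := by
      intro q r
      obtain ⟨t, ht | ht⟩ := C.bag_isBag q
      · calc C.bag q (some r) = O.Wm r t := by rw [ht]; rfl
          _ ≤ max (O.Wm r t) (O.Wp r t) := le_max_left _ _
          _ ≤ V := by
              rw [hV]
              exact Finset.le_sup
                (f := fun pt : P × T => max (O.Wm pt.1 pt.2) (O.Wp pt.1 pt.2))
                (Finset.mem_univ (r, t))
      · calc C.bag q (some r) = O.Wp r t := by rw [ht]; rfl
          _ ≤ max (O.Wm r t) (O.Wp r t) := le_max_right _ _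
          _ ≤ V := by
              rw [hV]
              exact Finset.le_sup
                (f := fun pt : P × T => max (O.Wm pt.1 pt.2) (O.Wp pt.1 pt.2))
                (Finset.mem_univ (r, t))
    have hnone : ∀ q : P, O.layer q = Nn - 1 → C.bag (some q) none = 0 := by
      intro q hq
      by_contra h
      obtain ⟨hl, _⟩ := C.resource (some q) none (by simp) (Nat.pos_of_ne_zero h)
      rw [hext] at hl
      have : C.layer (some q) = Nn - 1 := hq
      omega
    have hpotV : ∀ q : P, O.layer q = Nn - 1 → O.pot q ≤ Fintype.card P * V := by
      intro q hq
      have hsum : ∑ r : Option P, C.bag (some q) r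
          = ∑ r : P, C.bag (some q) (some r) := by
        rw [Fintype.sum_option, hnone q hq, zero_add]
      calc O.pot q ≤ ∑ r : Option P, C.bag (some q) r := Nat.sub_le _ _
        _ = ∑ r : P, C.bag (some q) (some r) := hsum
        _ ≤ ∑ _r : P, V := Finset.sum_le_sum (fun r _ => hentry (some q) r)
        _ = Fintype.card P * V := by
            rw [Finset.sum_const, smul_eq_mul, Finset.card_univ]
    have hPOTV : O.POT (Nn - 1) ≤ Fintype.card P * V := by
      rw [hPOTdef]
      apply Finset.sup_le
      intro q hq
      exact hpotV q (by simpa [OpenPi3.places] using hq)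
    have hwle : ∀ q : P, w q ≤ ((Fintype.card P * V : ℕ) : ℤ) := by
      intro q
      have hc : 1 ≤ Fintype.card P := Fintype.card_pos_iff.mpr ⟨q⟩
      have h1 : 1 ≤ Fintype.card P * V := Nat.one_le_iff_ne_zero.mpr (by positivity)
      rw [hwval q]
      by_cases h1' : O.layer q = Nn - 2
      · rw [if_pos h1', if_neg (by omega)]; omega
      · by_cases h2' : O.layer q = Nn - 1
        · rw [if_neg h1', if_pos h2']
          have h3 := hPOTV
          omega
        · rw [if_neg h1', if_neg h2']; omega
    have part2 : O.vdot (Nn - 2) m0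
        ≤ ((Fintype.card P * V : ℕ) : ℤ) * ∑ p, (m0 p : ℤ) := by
      rw [hvdot]
      calc ∑ q, w q * (m0 q : ℤ)
          ≤ ∑ q, ((Fintype.card P * V : ℕ) : ℤ) * (m0 q : ℤ) :=
            Finset.sum_le_sum (fun q _ =>
              mul_le_mul_of_nonneg_right (hwle q) (Nat.cast_nonneg _))
        _ = ((Fintype.card P * V : ℕ) : ℤ) * ∑ p, (m0 p : ℤ) := by
            rw [Finset.mul_sum]
    have final := part1.trans part2
    have : (↑(∑ p ∈ O.places (Nn - 1) \ O.placesMax (Nn - 1), m p) : ℤ)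
        ≤ ((Fintype.card P * V * ∑ p, m0 p : ℕ) : ℤ) := by
      push_cast
      push_cast at final
      linarith
    exact_mod_cast this
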